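/- Define F : ℂ² → ℝ³ by F(z,w) = (1/4)(|z|² − |w|², 2·Re(w·conj z), 2·Im(w·conj z)). Let A and A' be 2×n complex matrices with columns Cᵢ and C'ᵢ respectively, and suppose there exists a 2×2 complex matrix g with g·g* = 1 and det g = 1 such that F(C'ᵢ) = F(g·Cᵢ) for all i. Then there exists a diagonal n×n complex matrix t whose diagonal entries all have absolute value 1 such that A' = g·A·t. -/

import Mathlib

/-- The (scaled) Hopf map `F : ℂ² → ℝ³` on column vectors,
`F(z,w) = (1/4)(|z|² − |w|², 2·Re(w·conj z), 2·Im(w·conj z))`. -/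
noncomputable def hopfF (v : Fin 2 → ℂ) : Fin 3 → ℝ :=
  ![(‖v 0‖ ^ 2 - ‖v 1‖ ^ 2) / 4,
    2 * (v 1 * (starRingEnd ℂ) (v 0)).re / 4,
    2 * (v 1 * (starRingEnd ℂ) (v 0)).im / 4]

lemma hopf_inj (v w : Fin 2 → ℂ) (h : hopfF v = hopfF w) :
    ∃ c : ℂ, ‖c‖ = 1 ∧ v 0 = c * w 0 ∧ v 1 = c * w 1 := by
  have h0 := congrFun h 0
  have h1 := congrFun h 1
  have h2 := congrFun h 2
  simp only [hopfF, Matrix.cons_val_zero, Matrix.cons_val_one, Matrix.head_cons,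
    Matrix.cons_val_two, Matrix.tail_cons] at h0 h1 h2
  have hprodC : v 1 * (starRingEnd ℂ) (v 0) = w 1 * (starRingEnd ℂ) (w 0) := by
    apply Complex.ext <;> [linarith; linarith]
  have hprod : ‖v 1‖ * ‖v 0‖
      = ‖w 1‖ * ‖w 0‖ := by
    have := congrArg (‖·‖) hprodC
    simpa [map_mul] using this
  set a := ‖v 0‖ with ha_def
  set b := ‖v 1‖ with hb_def
  set a' := ‖w 0‖ with ha'_def
  set b' := ‖w 1‖ with hb'_def
  have hdiff : a ^ 2 - b ^ 2 = a' ^ 2 - b' ^ 2 := by linarith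
  have ha0 : 0 ≤ a := norm_nonneg _
  have hb0 : 0 ≤ b := norm_nonneg _
  have ha'0 : 0 ≤ a' := norm_nonneg _
  have hb'0 : 0 ≤ b' := norm_nonneg _
  have hp2 : (b * a) ^ 2 = (b' * a') ^ 2 := by rw [hprod]
  have hsq : (a ^ 2 + b ^ 2) ^ 2 = (a' ^ 2 + b' ^ 2) ^ 2 := by
    linear_combination (a^2 - b^2 + a'^2 - b'^2) * hdiff + 4 * hp2
  have hsum : a ^ 2 + b ^ 2 = a' ^ 2 + b' ^ 2 :=
    (sq_eq_sq₀ (by positivity) (by positivity)).mp hsq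
  have haa : a = a' := (sq_eq_sq₀ ha0 ha'0).mp (by linarith)
  have hbb : b = b' := (sq_eq_sq₀ hb0 hb'0).mp (by linarith)
  by_cases hw0 : w 0 = 0
  · have hv0 : v 0 = 0 := by
      have : a = 0 := by rw [haa, ha'_def]; simp [hw0]
      exact norm_eq_zero.mp this
    by_cases hw1 : w 1 = 0
    · have hv1 : v 1 = 0 := by
        have : b = 0 := by rw [hbb, hb'_def]; simp [hw1]
        exact norm_eq_zero.mp this
      exact ⟨1, by simp, by simp [hv0, hw0], by simp [hv1, hw1]⟩
    · refine ⟨v 1 / w 1, ?_, by simp [hv0, hw0], by field_simp⟩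
      rw [norm_div, ← hb_def, ← hb'_def, hbb]
      exact div_self (norm_ne_zero_iff.mpr hw1)
  · have hcw0 : (starRingEnd ℂ) (w 0) ≠ 0 := by simpa using hw0
    have hnorm : w 0 * (starRingEnd ℂ) (w 0) = v 0 * (starRingEnd ℂ) (v 0) := by
      rw [Complex.mul_conj, Complex.mul_conj]
      norm_cast
      rw [← Complex.sq_norm, ← Complex.sq_norm, ← ha_def, ← ha'_def, haa]
    have key : v 1 * w 0 = w 1 * v 0 := by
      apply mul_right_cancel₀ hcw0
      calc v 1 * w 0 * (starRingEnd ℂ) (w 0) = v 1 * (w 0 * (starRingEnd ℂ) (w 0)) := by ring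
        _ = v 1 * (v 0 * (starRingEnd ℂ) (v 0)) := by rw [hnorm]
        _ = (v 1 * (starRingEnd ℂ) (v 0)) * v 0 := by ring
        _ = (w 1 * (starRingEnd ℂ) (w 0)) * v 0 := by rw [hprodC]
        _ = w 1 * v 0 * (starRingEnd ℂ) (w 0) := by ring
    refine ⟨v 0 / w 0, ?_, by field_simp, ?_⟩
    · rw [norm_div, ← ha_def, ← ha'_def, haa]
      exact div_self (norm_ne_zero_iff.mpr hw0)
    · field_simp
      linear_combination key

/-- If the columns of `A'` and of `g·A` (`g ∈ SU(2)`) have the same images under `F`,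
then `A' = g·A·t` for a diagonal matrix `t` with unit-modulus diagonal entries. -/
theorem framed_polygon_injectivity (n : ℕ) (A A' : Matrix (Fin 2) (Fin n) ℂ)
    (g : Matrix (Fin 2) (Fin 2) ℂ) (hg : g * g.conjTranspose = 1) (hdet : g.det = 1)
    (h : ∀ i : Fin n, hopfF (fun j => A' j i) = hopfF (g.mulVec fun j => A j i)) :
    ∃ d : Fin n → ℂ, (∀ i, ‖d i‖ = 1) ∧ A' = g * A * Matrix.diagonal d := by
  choose c hc hc0 hc1 using fun i => hopf_inj _ _ (h i)
  refine ⟨c, hc, ?_⟩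
  ext j i
  have hGA : (g * A * Matrix.diagonal c) j i = (g.mulVec fun k => A k i) j * c i := by
    rw [Matrix.mul_diagonal, Matrix.mul_apply, Matrix.mulVec]
    rfl
  rw [hGA]
  fin_cases j
  · simpa [mul_comm] using hc0 i
  · simpa [mul_comm] using hc1 i
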